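/- Let U ⊆ ℝⁿ be open with 0 ∈ U, let f : U → ℝ be real analytic with ∇f(0) = 0, and set Q₀ = ℝⁿ × {0} ⊆ ℂⁿ and Q₁ = graph(∇f) = {x + i∇f(x) : x ∈ U}. Then there exists ε₀ > 0 such that for every ε ∈ (0, ε₀] the following holds: for every piecewise-C¹ path γ : [0,1] → B_{ε/9}(0) ⊆ ℂⁿ with γ(0) ∈ Q₀ and γ(1) ∈ Q₁, there exists a continuous, piecewise-C¹ map v : H → B_ε(γ(0)) with v([0,1]) ⊆ Q₀, v([−1,0]) ⊆ Q₁, v(0) = 0, and v(e^{iπt}) = γ(t) for all t ∈ [0,1]. -/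

import Mathlib

open Complex MeasureTheory Set

noncomputable section

/-- The closed upper half-disk `H = {z ∈ ℂ : Im z ≥ 0, |z| ≤ 1}`. -/
def HDisk : Set ℂ := {z : ℂ | 0 ≤ z.im ∧ ‖z‖ ≤ 1}

/-- Real part, `ℂⁿ → ℝⁿ`, under the identification `ℂⁿ = ℝⁿ ⊕ iℝⁿ`. -/
def reP (n : ℕ) (z : EuclideanSpace ℂ (Fin n)) : EuclideanSpace ℝ (Fin n) :=
  WithLp.toLp 2 (fun k => (z k).re)

/-- Imaginary part, `ℂⁿ → ℝⁿ`, under the identification `ℂⁿ = ℝⁿ ⊕ iℝⁿ`. -/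
def imP (n : ℕ) (z : EuclideanSpace ℂ (Fin n)) : EuclideanSpace ℝ (Fin n) :=
  WithLp.toLp 2 (fun k => (z k).im)

/-- The standard symplectic form `ω₀(u,v) = ∑ₖ (Re uₖ · Im vₖ − Im uₖ · Re vₖ)` on `ℂⁿ`. -/
def omega0 (n : ℕ) (u v : EuclideanSpace ℂ (Fin n)) : ℝ :=
  ∑ k, ((u k).re * (v k).im - (u k).im * (v k).re)

/-- The Lagrangian `Q₀ = ℝⁿ × {0} ⊆ ℂⁿ`. -/
def Q0 (n : ℕ) : Set (EuclideanSpace ℂ (Fin n)) := {z | ∀ k, (z k).im = 0}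

/-- The Lagrangian `Q₁ = graph(∇f) = {x + i∇f(x) : x ∈ U} ⊆ ℂⁿ`. -/
def Q1 (n : ℕ) (U : Set (EuclideanSpace ℝ (Fin n)))
    (f : EuclideanSpace ℝ (Fin n) → ℝ) : Set (EuclideanSpace ℂ (Fin n)) :=
  {z | reP n z ∈ U ∧ imP n z = gradient f (reP n z)}

/-- A map `v : ℂ → ℂⁿ` is piecewise `C¹` on a set `s` if it is continuous on `s` and
`s` is covered by finitely many compact pieces on each of which `v` is `C¹`. -/
def PiecewiseC1On (n : ℕ) (v : ℂ → EuclideanSpace ℂ (Fin n)) (s : Set ℂ) : Prop :=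
  ContinuousOn v s ∧ ∃ (m : ℕ) (K : Fin m → Set ℂ),
    (∀ i, IsCompact (K i)) ∧ s ⊆ ⋃ i, K i ∧ ∀ i, ContDiffOn ℝ 1 v (K i)

/-- A path `γ : [0,1] → ℂⁿ` is piecewise `C¹` if it is continuous on `[0,1]` and `C¹`
on each interval of some finite partition `0 = t₀ ≤ ⋯ ≤ t_m = 1`. -/
def PiecewiseC1Path (n : ℕ) (γ : ℝ → EuclideanSpace ℂ (Fin n)) : Prop :=
  ContinuousOn γ (Set.Icc 0 1) ∧ ∃ (m : ℕ) (t : Fin (m + 1) → ℝ),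
    Monotone t ∧ t 0 = 0 ∧ t (Fin.last m) = 1 ∧
    ∀ i : Fin m, ContDiffOn ℝ 1 γ (Set.Icc (t i.castSucc) (t i.succ))

/-- The length `ℓ(γ) = ∫₀¹ ‖γ′(t)‖ dt` of a path `γ : [0,1] → ℂⁿ`. -/
def pathLength (n : ℕ) (γ : ℝ → EuclideanSpace ℂ (Fin n)) : ℝ :=
  ∫ t in (0:ℝ)..1, ‖deriv γ t‖

/-- The pullback integral `∫_H v*ω₀ = ∫_H ω₀(∂ₓv(z), ∂_yv(z)) dx dy`. -/
def formIntegral (n : ℕ) (v : ℂ → EuclideanSpace ℂ (Fin n)) : ℝ :=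
  ∫ z in HDisk, omega0 n (fderiv ℝ v z 1) (fderiv ℝ v z Complex.I)

set_option maxHeartbeats 1000000

section FillingAux

lemma sqrt_sum_le {A B : ℝ} (hA : 0 ≤ A) (hB : 0 ≤ B) :
    Real.sqrt (A + B) ≤ Real.sqrt A + Real.sqrt B := by
  have h := Real.sqrt_le_sqrt (show A + B ≤ (Real.sqrt A + Real.sqrt B)^2 by
    nlinarith [Real.sq_sqrt hA, Real.sq_sqrt hB, Real.sqrt_nonneg A, Real.sqrt_nonneg B])
  rwa [Real.sqrt_sq (by positivity)] at h

/-- chart 1 : `arg` on `re > 0`. -/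
lemma arg_chart1 {z : ℂ} (h : 0 < z.re) : Complex.arg z = Real.arctan (z.im / z.re) := by
  rw [← Complex.tan_arg]
  have habs : |Complex.arg z| < Real.pi / 2 := Complex.abs_arg_lt_pi_div_two_iff.2 (Or.inl h)
  rw [abs_lt] at habs
  exact (Real.arctan_tan (by linarith [habs.1]) habs.2).symm

/-- chart 2 : `arg` on `im > 0`. -/
lemma arg_chart2 {z : ℂ} (h : 0 < z.im) :
    Complex.arg z = Real.pi / 2 - Real.arctan (z.re / z.im) := by
  have hz : z ≠ 0 := fun hz => by simp [hz] at h
  have habs : (0:ℝ) < ‖z‖ := norm_pos_iff.mpr hz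
  have hsin : Real.sin (Complex.arg z) = z.im / ‖z‖ := Complex.sin_arg z
  have hcos : Real.cos (Complex.arg z) = z.re / ‖z‖ := Complex.cos_arg hz
  have h1 : 0 < Complex.arg z := by
    rcases lt_or_ge 0 (Complex.arg z) with h' | h'
    · exact h'
    · exfalso
      have hs : Real.sin (Complex.arg z) ≤ 0 :=
        Real.sin_nonpos_of_nonpos_of_neg_pi_le h' (le_of_lt (Complex.neg_pi_lt_arg z))
      rw [hsin] at hs
      have : 0 < z.im / ‖z‖ := div_pos h habs
      linarith
  have h2 : Complex.arg z < Real.pi := by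
    rcases lt_or_eq_of_le (Complex.arg_le_pi z) with h' | h'
    · exact h'
    · exfalso
      have := Complex.arg_eq_pi_iff.1 h'
      linarith [this.2]
  have key : Real.tan (Complex.arg z - Real.pi / 2) = -(z.re / z.im) := by
    rw [Real.tan_eq_sin_div_cos, Real.sin_sub_pi_div_two, Real.cos_sub_pi_div_two, hsin, hcos]
    field_simp
  have harct := Real.arctan_tan (x := Complex.arg z - Real.pi / 2)
    (by linarith) (by linarith [Real.pi_pos])
  rw [key, Real.arctan_neg] at harct
  linarith [harct]

/-- chart 3 : `arg` on `re < 0, im ≥ 0`. -/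
lemma arg_chart3 {z : ℂ} (h : z.re < 0) (h2 : 0 ≤ z.im) :
    Complex.arg z = Real.pi + Real.arctan (z.im / z.re) := by
  have hz : z ≠ 0 := fun hz => by simp [hz] at h
  have habs : (0:ℝ) < ‖z‖ := norm_pos_iff.mpr hz
  have hcos : Real.cos (Complex.arg z) = z.re / ‖z‖ := Complex.cos_arg hz
  have h0 : 0 ≤ Complex.arg z := Complex.arg_nonneg_iff.2 h2
  have h1 : Real.pi / 2 < Complex.arg z := by
    by_contra h'
    push_neg at h'
    have : 0 ≤ Real.cos (Complex.arg z) :=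
      Real.cos_nonneg_of_mem_Icc ⟨by linarith [Real.pi_pos], h'⟩
    rw [hcos] at this
    have : z.re / ‖z‖ < 0 := div_neg_of_neg_of_pos h habs
    linarith
  have hle : Complex.arg z ≤ Real.pi := Complex.arg_le_pi z
  have key : Real.tan (Complex.arg z - Real.pi) = z.im / z.re := by
    rw [Real.tan_sub_pi, Complex.tan_arg]
  have harct := Real.arctan_tan (x := Complex.arg z - Real.pi)
    (by linarith) (by linarith [Real.pi_pos])
  rw [key] at harct
  linarith [harct]


variable {n : ℕ}

/-- smoothness of `Complex.abs` away from zero. -/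
lemma contDiffAt_cabs {z : ℂ} (hz : z ≠ 0) :
    ContDiffAt ℝ 1 (fun w => ‖w‖) z := by
  have heq : (fun w : ℂ => ‖w‖) = fun w => Real.sqrt (w.re * w.re + w.im * w.im) := by
    funext w
    rw [Complex.norm_def, Complex.normSq_apply]
  rw [heq]
  have hinner : ContDiffAt ℝ 1 (fun w : ℂ => w.re * w.re + w.im * w.im) z :=
    ((Complex.reCLM.contDiff.mul Complex.reCLM.contDiff).add
      (Complex.imCLM.contDiff.mul Complex.imCLM.contDiff)).contDiffAt
  have hne : z.re * z.re + z.im * z.im ≠ 0 := by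
    have := Complex.normSq_pos.2 hz
    rw [Complex.normSq_apply] at this
    exact ne_of_gt this
  exact (Real.contDiffAt_sqrt hne).comp z hinner

variable {n : ℕ}

lemma norm_reP_le (z : EuclideanSpace ℂ (Fin n)) : ‖reP n z‖ ≤ ‖z‖ := by
  rw [EuclideanSpace.norm_eq, EuclideanSpace.norm_eq]
  apply Real.sqrt_le_sqrt
  apply Finset.sum_le_sum
  intro k _
  have h1 : ‖reP n z k‖ ≤ ‖z k‖ := by
    simpa [reP, Real.norm_eq_abs] using Complex.abs_re_le_norm (z k)
  have h0 : (0:ℝ) ≤ ‖reP n z k‖ := norm_nonneg _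
  nlinarith [norm_nonneg (z k)]

lemma norm_imP_le (z : EuclideanSpace ℂ (Fin n)) : ‖imP n z‖ ≤ ‖z‖ := by
  rw [EuclideanSpace.norm_eq, EuclideanSpace.norm_eq]
  apply Real.sqrt_le_sqrt
  apply Finset.sum_le_sum
  intro k _
  have h1 : ‖imP n z k‖ ≤ ‖z k‖ := by
    simpa [imP, Real.norm_eq_abs] using Complex.abs_im_le_norm (z k)
  have h0 : (0:ℝ) ≤ ‖imP n z k‖ := norm_nonneg _
  nlinarith [norm_nonneg (z k)]

/-- the embedding `x + i y`. -/
def mk2 (n : ℕ) (x y : EuclideanSpace ℝ (Fin n)) : EuclideanSpace ℂ (Fin n) :=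
  WithLp.toLp 2 (fun k => (x k : ℂ) + (y k : ℂ) * Complex.I)

lemma reP_mk2 (x y : EuclideanSpace ℝ (Fin n)) : reP n (mk2 n x y) = x := by
  refine PiLp.ext fun k => ?_; simp [reP, mk2]

lemma imP_mk2 (x y : EuclideanSpace ℝ (Fin n)) : imP n (mk2 n x y) = y := by
  refine PiLp.ext fun k => ?_; simp [imP, mk2]

lemma norm_mk2_le (x y : EuclideanSpace ℝ (Fin n)) : ‖mk2 n x y‖ ≤ ‖x‖ + ‖y‖ := by
  rw [EuclideanSpace.norm_eq, EuclideanSpace.norm_eq, EuclideanSpace.norm_eq]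
  have hsum : ∀ k, ‖mk2 n x y k‖ ^ 2 = ‖x k‖ ^ 2 + ‖y k‖ ^ 2 := by
    intro k
    show ‖(x k : ℂ) + (y k : ℂ) * Complex.I‖ ^ 2 = _
    rw [Complex.sq_norm, Complex.normSq_add_mul_I]
    simp [Real.norm_eq_abs, sq_abs]
  calc Real.sqrt (∑ k, ‖mk2 n x y k‖ ^ 2)
      = Real.sqrt ((∑ k, ‖x k‖^2) + ∑ k, ‖y k‖^2) := by
        rw [← Finset.sum_add_distrib]
        congr 1
        exact Finset.sum_congr rfl fun k _ => hsum k
    _ ≤ _ := sqrt_sum_le (by positivity) (by positivity)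

/-- decomposition of an element of the graph. -/
lemma eq_mk2_of_parts (z : EuclideanSpace ℂ (Fin n)) : z = mk2 n (reP n z) (imP n z) := by
  refine PiLp.ext fun k => ?_
  apply Complex.ext <;> simp [mk2, reP, imP]

/-- member of a partition interval. -/
lemma exists_partition_mem {m : ℕ} {t : Fin (m + 1) → ℝ} (ht : Monotone t)
    (h0 : t 0 = 0) (h1 : t (Fin.last m) = 1) {s : ℝ} (hs : s ∈ Set.Icc (0:ℝ) 1) :
    ∃ i : Fin m, s ∈ Set.Icc (t i.castSucc) (t i.succ) := by
  rcases Nat.eq_zero_or_pos m with hm | hm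
  · exfalso
    subst hm
    rw [show (Fin.last 0) = 0 from rfl] at h1
    rw [h0] at h1
    norm_num at h1
  classical
  set F : Finset (Fin (m + 1)) := Finset.univ.filter (fun j => t j ≤ s) with hF
  have hFne : F.Nonempty := ⟨0, by simp [hF, h0, hs.1]⟩
  set j₀ := F.max' hFne with hj₀
  have hj₀mem : j₀ ∈ F := F.max'_mem hFne
  have hj₀le : t j₀ ≤ s := by simpa [hF] using (Finset.mem_filter.1 hj₀mem).2
  by_cases hlast : j₀ = Fin.last m
  · -- then s = 1
    have hs1 : s = 1 := le_antisymm hs.2 (by rw [← h1, ← hlast]; exact hj₀le)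
    obtain ⟨m', rfl⟩ : ∃ m', m = m' + 1 := ⟨m - 1, (Nat.succ_pred_eq_of_pos hm).symm⟩
    refine ⟨Fin.last m', ?_, ?_⟩
    · have h := ht (Fin.le_last (Fin.last m').castSucc)
      rw [h1] at h
      rw [hs1]
      exact h
    · rw [Fin.succ_last, h1, hs1]
  · have hlt : (j₀ : ℕ) < m := by
      have h := (Fin.le_last j₀).lt_of_ne hlast
      exact h
    refine ⟨⟨(j₀ : ℕ), hlt⟩, ?_, ?_⟩
    · have : (⟨(j₀ : ℕ), hlt⟩ : Fin m).castSucc = j₀ := by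
        ext; simp
      rw [this]; exact hj₀le
    · by_contra h'
      push_neg at h'
      have hmem : (⟨(j₀:ℕ), hlt⟩ : Fin m).succ ∈ F := by
        simp only [hF, Finset.mem_filter, Finset.mem_univ, true_and]
        exact le_of_lt h'
      have hle := F.le_max' _ hmem
      rw [← hj₀] at hle
      have : j₀ < (⟨(j₀:ℕ), hlt⟩ : Fin m).succ := by
        rw [Fin.lt_iff_val_lt_val]
        simp
      exact absurd (lt_of_lt_of_le this hle) (lt_irrefl _)


/-- Package: radius on which the gradient is `C¹` and satisfies the key segment estimate. -/
lemma grad_package {U : Set (EuclideanSpace ℝ (Fin n))} (hUopen : IsOpen U)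
    (hU0 : (0 : EuclideanSpace ℝ (Fin n)) ∈ U)
    {f : EuclideanSpace ℝ (Fin n) → ℝ} (hf : AnalyticOn ℝ f U)
    (hgrad : gradient f 0 = 0) :
    ∃ r : ℝ, 0 < r ∧ Metric.ball (0 : EuclideanSpace ℝ (Fin n)) r ⊆ U ∧
      ContDiffOn ℝ 1 (gradient f) (Metric.ball 0 r) ∧
      ∀ x ∈ Metric.ball (0 : EuclideanSpace ℝ (Fin n)) r, ∀ t ∈ Set.Icc (0:ℝ) 1,
        ‖gradient f (t • x)‖ ≤ ‖gradient f x‖ + ‖x‖ := by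
  have hfn : AnalyticOnNhd ℝ f U := (hUopen.analyticOn_iff_analyticOnNhd).1 hf
  set F := fderiv ℝ f with hFdef
  have hF : AnalyticOnNhd ℝ F U := hfn.fderiv
  have hDF : AnalyticOnNhd ℝ (fderiv ℝ F) U := hF.fderiv
  have hDFc : ContinuousAt (fderiv ℝ F) 0 :=
    (hDF 0 hU0).continuousAt
  -- radius inside U
  obtain ⟨r₁, hr₁pos, hr₁⟩ := Metric.isOpen_iff.1 hUopen 0 hU0
  -- radius of continuity
  obtain ⟨r₂, hr₂pos, hr₂⟩ := (Metric.continuousAt_iff (f := fderiv ℝ F) (a := 0)).1 hDFc (1/2) (by norm_num)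
  refine ⟨min r₁ r₂, lt_min hr₁pos hr₂pos, ?_, ?_, ?_⟩
  · exact Set.Subset.trans (Metric.ball_subset_ball (min_le_left _ _)) hr₁
  · -- smoothness
    have hFc : ContDiffOn ℝ 1 F U := hF.contDiffOn hUopen.uniqueDiffOn
    have : ContDiffOn ℝ 1 (fun x => (InnerProductSpace.toDual ℝ (EuclideanSpace ℝ (Fin n))).symm (F x)) U :=
      ((InnerProductSpace.toDual ℝ (EuclideanSpace ℝ (Fin n))).symm.contDiff).comp_contDiffOn hFc
    exact (this.mono (Set.Subset.trans (Metric.ball_subset_ball (min_le_left _ _)) hr₁))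
  · intro x hx t ht
    have hxU : ∀ s : ℝ, s ∈ Set.Icc (0:ℝ) 1 → s • x ∈ Metric.ball (0:EuclideanSpace ℝ (Fin n)) (min r₁ r₂) := by
      intro s hs
      rw [Metric.mem_ball, dist_zero_right] at hx ⊢
      calc ‖s • x‖ = |s| * ‖x‖ := by rw [norm_smul, Real.norm_eq_abs]
        _ ≤ 1 * ‖x‖ := by
            apply mul_le_mul_of_nonneg_right _ (norm_nonneg x)
            rw [abs_le]; constructor <;> linarith [hs.1, hs.2]
        _ < min r₁ r₂ := by rwa [one_mul]
    have hF0 : F 0 = 0 := by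
      have h := congrArg (InnerProductSpace.toDual ℝ (EuclideanSpace ℝ (Fin n))) hgrad
      simpa [gradient] using h
    set T := fderiv ℝ F 0 with hT
    -- derivative bound for φ s = F (s • x) - s • (T x)
    set φ : ℝ → (EuclideanSpace ℝ (Fin n) →L[ℝ] ℝ) := fun s => F (s • x) - s • (T x) with hφ
    have hder : ∀ s ∈ Set.Icc (0:ℝ) 1,
        HasDerivWithinAt φ ((fderiv ℝ F (s • x)) x - T x) (Set.Icc 0 1) s := by
      intro s hs
      have h1 : HasDerivAt (fun u : ℝ => u • x) x s := by
        simpa using (hasDerivAt_id s).smul_const x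
      have hmem : s • x ∈ U := hr₁ (Metric.ball_subset_ball (min_le_left _ _) (hxU s hs))
      have h2 : HasFDerivAt F (fderiv ℝ F (s • x)) (s • x) :=
        (hF (s • x) hmem).differentiableAt.hasFDerivAt
      have h3 : HasDerivAt (fun u : ℝ => F (u • x)) ((fderiv ℝ F (s • x)) x) s :=
        h2.comp_hasDerivAt s h1
      have h4 : HasDerivAt (fun u : ℝ => u • (T x)) (T x) s := by
        simpa using (hasDerivAt_id s).smul_const (T x)
      exact (h3.sub h4).hasDerivWithinAt
    have hbound : ∀ s ∈ Set.Icc (0:ℝ) 1,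
        ‖(fderiv ℝ F (s • x)) x - T x‖ ≤ (1/2) * ‖x‖ := by
      intro s hs
      have hmem := hxU s hs
      have hd : dist (s • x) 0 < r₂ := by
        rw [Metric.mem_ball] at hmem
        exact lt_of_lt_of_le hmem (min_le_right _ _)
      have := hr₂ hd
      replace this : ‖fderiv ℝ F (s • x) - T‖ < 1/2 := lt_of_eq_of_lt (dist_eq_norm (E := EuclideanSpace ℝ (Fin n) →L[ℝ] EuclideanSpace ℝ (Fin n) →L[ℝ] ℝ) _ _).symm this
      calc ‖(fderiv ℝ F (s • x)) x - T x‖ = ‖(fderiv ℝ F (s • x) - T) x‖ := by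
            rw [ContinuousLinearMap.sub_apply]
        _ ≤ ‖fderiv ℝ F (s • x) - T‖ * ‖x‖ := ContinuousLinearMap.le_opNorm _ x
        _ ≤ (1/2) * ‖x‖ := by
            apply mul_le_mul_of_nonneg_right (le_of_lt this) (norm_nonneg x)
    have hmvt : ∀ u ∈ Set.Icc (0:ℝ) 1, ‖φ u - φ 0‖ ≤ (1/2) * ‖x‖ * (u - 0) :=
      fun u hu => norm_image_sub_le_of_norm_deriv_le_segment' hder
        (fun s hs => hbound s (Set.mem_Icc_of_Ico hs)) u hu
    have hφ0 : φ 0 = 0 := by simp [hφ, hF0]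
    have hφt := hmvt t ht
    have hφ1 := hmvt 1 (by norm_num)
    rw [hφ0, sub_zero] at hφt hφ1
    rw [sub_zero] at hφt hφ1
    norm_num at hφ1
    have hφ1' : ‖F x - T x‖ ≤ (1/2) * ‖x‖ := by
      simpa [hφ, one_smul] using hφ1
    have hφt' : ‖F (t • x) - t • T x‖ ≤ (1/2) * ‖x‖ * t := by
      simpa [hφ] using hφt
    have hTx : ‖T x‖ ≤ ‖F x‖ + (1/2) * ‖x‖ := by
      have h := norm_sub_norm_le (T x) (F x)
      rw [norm_sub_rev] at h
      linarith
    have hFt : ‖F (t • x)‖ ≤ ‖F x‖ + ‖x‖ := by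
      have h := norm_sub_norm_le (F (t • x)) (t • T x)
      have h6 : ‖t • (T x)‖ ≤ ‖T x‖ := by
        rw [norm_smul, Real.norm_eq_abs, _root_.abs_of_nonneg ht.1]
        nlinarith [norm_nonneg (T x), ht.2, ht.1]
      have h7 : (1/2) * ‖x‖ * t ≤ (1/2) * ‖x‖ := by
        nlinarith [norm_nonneg x, ht.1, ht.2]
      linarith
    -- back to gradients
    have hgnorm : ∀ y : EuclideanSpace ℝ (Fin n), ‖gradient f y‖ = ‖F y‖ := by
      intro y
      rw [gradient]
      exact LinearIsometryEquiv.norm_map _ _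
    rw [hgnorm, hgnorm]
    exact hFt
-- ## the filling map
def fillA (z : ℂ) : ℝ := Complex.arg z / Real.pi

def fill (n : ℕ) (γ δ : ℝ → EuclideanSpace ℂ (Fin n)) (z : ℂ) : EuclideanSpace ℂ (Fin n) :=
  if 1/2 ≤ ‖z‖ then
    (2 * ‖z‖ - 1) • γ (fillA z) + (2 - 2 * ‖z‖) • δ (fillA z)
  else δ (max 0 (4 * ‖z‖ - 1) * fillA z)

lemma fillA_mem {z : ℂ} (hz : 0 ≤ z.im) : fillA z ∈ Set.Icc (0:ℝ) 1 := by
  have h1 : 0 ≤ Complex.arg z := Complex.arg_nonneg_iff.2 hz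
  have h2 : Complex.arg z ≤ Real.pi := Complex.arg_le_pi z
  have hp := Real.pi_pos
  unfold fillA
  constructor
  · exact div_nonneg h1 (le_of_lt hp)
  · rw [div_le_one hp]; exact h2

variable {n : ℕ}

lemma fill_eq_inner (γ δ : ℝ → EuclideanSpace ℂ (Fin n)) {z : ℂ}
    (h : ‖z‖ ≤ 1/4) : fill n γ δ z = δ 0 := by
  unfold fill
  rw [if_neg (not_le.2 (lt_of_le_of_lt h (by norm_num))),
    max_eq_left (by linarith), zero_mul]

lemma fill_eq_mid (γ δ : ℝ → EuclideanSpace ℂ (Fin n)) {z : ℂ}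
    (h1 : 1/4 ≤ ‖z‖) (h2 : ‖z‖ ≤ 1/2) :
    fill n γ δ z = δ ((4 * ‖z‖ - 1) * fillA z) := by
  unfold fill
  by_cases h : 1/2 ≤ ‖z‖
  · have heq : ‖z‖ = 1/2 := le_antisymm h2 h
    rw [if_pos h, heq]
    norm_num
  · rw [if_neg h, max_eq_right (by linarith)]

lemma fill_eq_outer (γ δ : ℝ → EuclideanSpace ℂ (Fin n)) {z : ℂ}
    (h : 1/2 ≤ ‖z‖) :
    fill n γ δ z = (2 * ‖z‖ - 1) • γ (fillA z)
      + (2 - 2 * ‖z‖) • δ (fillA z) := if_pos h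

-- ## boundary evaluations
lemma fill_ofReal_nonneg (γ δ : ℝ → EuclideanSpace ℂ (Fin n)) {t : ℝ} (h0 : 0 ≤ t) :
    fill n γ δ (t : ℂ) =
      if 1/2 ≤ t then (2*t - 1) • γ 0 + (2 - 2*t) • δ 0 else δ 0 := by
  have habs : ‖(t : ℂ)‖ = t := by
    rw [Complex.norm_real, Real.norm_eq_abs, _root_.abs_of_nonneg h0]
  have harg : fillA (t : ℂ) = 0 := by
    rw [fillA, Complex.arg_ofReal_of_nonneg h0, zero_div]
  unfold fill
  rw [habs, harg, mul_zero]

lemma fill_ofReal_neg (γ δ : ℝ → EuclideanSpace ℂ (Fin n)) (hδγ : δ 1 = γ 1)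
    {t : ℝ} (h0 : t < 0) :
    fill n γ δ (t : ℂ) =
      if 1/2 ≤ -t then γ 1 else δ (max 0 (4 * (-t) - 1)) := by
  have habs : ‖(t : ℂ)‖ = -t := by
    rw [Complex.norm_real, Real.norm_eq_abs, abs_of_neg h0]
  have harg : fillA (t : ℂ) = 1 := by
    rw [fillA, Complex.arg_ofReal_of_neg h0, div_self (ne_of_gt Real.pi_pos)]
  unfold fill
  rw [habs, harg, mul_one]
  by_cases h : 1/2 ≤ -t
  · rw [if_pos h, if_pos h, hδγ, ← add_smul]
    have : 2 * -t - 1 + (2 - 2 * -t) = 1 := by ring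
    rw [this, one_smul]
  · rw [if_neg h, if_neg h]

lemma fill_zero (γ δ : ℝ → EuclideanSpace ℂ (Fin n)) : fill n γ δ 0 = δ 0 :=
  fill_eq_inner γ δ (by simp)

lemma fill_arc (γ δ : ℝ → EuclideanSpace ℂ (Fin n)) {t : ℝ} (h0 : 0 ≤ t) (h1 : t ≤ 1) :
    fill n γ δ (Complex.exp (↑(Real.pi * t) * Complex.I)) = γ t := by
  have hp := Real.pi_pos
  have habs : ‖Complex.exp (↑(Real.pi * t) * Complex.I)‖ = 1 :=
    Complex.norm_exp_ofReal_mul_I _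
  have harg : Complex.arg (Complex.exp (↑(Real.pi * t) * Complex.I)) = Real.pi * t := by
    rw [Complex.exp_mul_I]
    exact Complex.arg_cos_add_sin_mul_I
      ⟨by nlinarith, by nlinarith⟩
  have hA : fillA (Complex.exp (↑(Real.pi * t) * Complex.I)) = t := by
    rw [fillA, harg, mul_comm, mul_div_assoc, div_self (ne_of_gt hp), mul_one]
  rw [fill_eq_outer γ δ (by rw [habs]; norm_num), hA, habs]
  norm_num

-- ## norm bound
lemma fill_norm_le (γ δ : ℝ → EuclideanSpace ℂ (Fin n)) (c : EuclideanSpace ℂ (Fin n))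
    (B : ℝ) (hγ : ∀ s ∈ Set.Icc (0:ℝ) 1, ‖γ s - c‖ ≤ B)
    (hδ : ∀ s ∈ Set.Icc (0:ℝ) 1, ‖δ s - c‖ ≤ B)
    {z : ℂ} (hz : z ∈ HDisk) : ‖fill n γ δ z - c‖ ≤ B := by
  have hA := fillA_mem hz.1
  by_cases h : 1/2 ≤ ‖z‖
  · rw [fill_eq_outer γ δ h]
    set lam := 2 * ‖z‖ - 1 with hlam
    set mu := 2 - 2 * ‖z‖ with hmu
    have hsum : lam + mu = 1 := by rw [hlam, hmu]; ring
    have hlam0 : 0 ≤ lam := by rw [hlam]; linarith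
    have hmu0 : 0 ≤ mu := by rw [hmu]; linarith [hz.2]
    have hc : lam • c + mu • c = c := by rw [← add_smul, hsum, one_smul]
    have hre : lam • γ (fillA z) + mu • δ (fillA z) - c
        = lam • (γ (fillA z) - c) + mu • (δ (fillA z) - c) := by
      rw [smul_sub, smul_sub]
      rw [show lam • γ (fillA z) - lam • c + (mu • δ (fillA z) - mu • c)
          = lam • γ (fillA z) + mu • δ (fillA z) - (lam • c + mu • c) by abel, hc]
    rw [hre]
    calc ‖lam • (γ (fillA z) - c) + mu • (δ (fillA z) - c)‖
        ≤ ‖lam • (γ (fillA z) - c)‖ + ‖mu • (δ (fillA z) - c)‖ := norm_add_le _ _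
      _ = lam * ‖γ (fillA z) - c‖ + mu * ‖δ (fillA z) - c‖ := by
          rw [norm_smul, norm_smul, Real.norm_eq_abs, Real.norm_eq_abs,
            _root_.abs_of_nonneg hlam0, _root_.abs_of_nonneg hmu0]
      _ ≤ lam * B + mu * B :=
          add_le_add (mul_le_mul_of_nonneg_left (hγ _ hA) hlam0)
            (mul_le_mul_of_nonneg_left (hδ _ hA) hmu0)
      _ = B := by rw [← add_mul, hsum, one_mul]
  · push_neg at h
    by_cases h4 : ‖z‖ ≤ 1/4
    · rw [fill_eq_inner γ δ h4]
      exact hδ 0 (by norm_num)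
    · push_neg at h4
      rw [fill_eq_mid γ δ (le_of_lt h4) (le_of_lt h)]
      apply hδ
      have hco : 0 ≤ 4 * ‖z‖ - 1 := by linarith
      have hco1 : 4 * ‖z‖ - 1 ≤ 1 := by linarith
      constructor
      · exact mul_nonneg hco hA.1
      · exact mul_le_one₀ hco1 hA.1 hA.2

-- ## piecewise smoothness
lemma piecewise_of_cover {v : ℂ → EuclideanSpace ℂ (Fin n)} {s : Set ℂ}
    {ι : Type} [Fintype ι] (K : ι → Set ℂ) (hK : ∀ i, IsCompact (K i))
    (hKc : ∀ i, IsClosed (K i)) (hcov : s ⊆ ⋃ i, K i)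
    (hcd : ∀ i, ContDiffOn ℝ 1 v (K i)) : PiecewiseC1On n v s := by
  constructor
  · exact ((locallyFinite_of_finite K).continuousOn_iUnion hKc
      (fun i => (hcd i).continuousOn)).mono hcov
  · refine ⟨Fintype.card ι, K ∘ (Fintype.equivFin ι).symm, fun i => hK _, ?_, fun i => hcd _⟩
    intro x hx
    obtain ⟨i, hi⟩ := Set.mem_iUnion.1 (hcov hx)
    exact Set.mem_iUnion.2 ⟨Fintype.equivFin ι i, by simpa using hi⟩

/-- chart functions -/
def chart : Fin 3 → ℂ → ℝ
  | 0 => fun z => Real.arctan (z.im / z.re)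
  | 1 => fun z => Real.pi / 2 - Real.arctan (z.re / z.im)
  | 2 => fun z => Real.pi + Real.arctan (z.im / z.re)

/-- chart domains -/
def chDom : Fin 3 → Set ℂ
  | 0 => {z | 1/8 ≤ z.re}
  | 1 => {z | 1/8 ≤ z.im}
  | 2 => {z | z.re ≤ -(1/8)}

lemma chDom_closed (j : Fin 3) : IsClosed (chDom j) := by
  fin_cases j
  · exact isClosed_le continuous_const Complex.continuous_re
  · exact isClosed_le continuous_const Complex.continuous_im
  · exact isClosed_le Complex.continuous_re continuous_const

lemma chart_eq_arg {j : Fin 3} {z : ℂ} (hj : z ∈ chDom j) (him : 0 ≤ z.im) :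
    chart j z = Complex.arg z := by
  fin_cases j
  · exact (arg_chart1 (by have : (1:ℝ)/8 ≤ z.re := hj; linarith)).symm
  · exact (arg_chart2 (by have : (1:ℝ)/8 ≤ z.im := hj; linarith)).symm
  · exact (arg_chart3 (by have : z.re ≤ -(1/8) := hj; linarith) him).symm

lemma chart_contDiffAt {j : Fin 3} {z : ℂ} (hj : z ∈ chDom j) :
    ContDiffAt ℝ 1 (chart j) z := by
  fin_cases j
  · have hre : z.re ≠ 0 := by have : (1:ℝ)/8 ≤ z.re := hj; intro h; rw [h] at this; linarith
    exact Real.contDiff_arctan.contDiffAt.comp z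
      ((Complex.imCLM.contDiff.contDiffAt).div (Complex.reCLM.contDiff.contDiffAt) hre)
  · have him : z.im ≠ 0 := by have : (1:ℝ)/8 ≤ z.im := hj; intro h; rw [h] at this; linarith
    exact contDiffAt_const.sub (Real.contDiff_arctan.contDiffAt.comp z
      ((Complex.reCLM.contDiff.contDiffAt).div (Complex.imCLM.contDiff.contDiffAt) him))
  · have hre : z.re ≠ 0 := by
      have : z.re ≤ -(1/8) := hj; intro h; rw [h] at this; linarith
    exact contDiffAt_const.add (Real.contDiff_arctan.contDiffAt.comp z
      ((Complex.imCLM.contDiff.contDiffAt).div (Complex.reCLM.contDiff.contDiffAt) hre))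

lemma chDom_cover {z : ℂ} (habs : 1/4 ≤ ‖z‖) (him : 0 ≤ z.im) :
    ∃ j : Fin 3, z ∈ chDom j := by
  have hsq : (‖z‖)^2 = z.re^2 + z.im^2 := by
    rw [Complex.sq_norm, Complex.normSq_apply]; ring
  by_cases h1 : 1/8 ≤ z.re
  · exact ⟨0, h1⟩
  by_cases h2 : z.re ≤ -(1/8)
  · exact ⟨2, h2⟩
  push_neg at h1 h2
  refine ⟨1, ?_⟩
  show (1:ℝ)/8 ≤ z.im
  nlinarith [norm_nonneg z, habs]

lemma fill_piecewiseC1 (γ δ : ℝ → EuclideanSpace ℂ (Fin n))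
    (m : ℕ) (t : Fin (m+1) → ℝ) (ht : Monotone t) (ht0 : t 0 = 0)
    (ht1 : t (Fin.last m) = 1)
    (hγ : ∀ i : Fin m, ContDiffOn ℝ 1 γ (Set.Icc (t i.castSucc) (t i.succ)))
    (hδ : ContDiffOn ℝ 1 δ (Set.Icc (0:ℝ) 1)) :
    PiecewiseC1On n (fill n γ δ) HDisk := by
  classical
  have hp := Real.pi_pos
  set Hup : Set ℂ := {z | 0 ≤ z.im} with hHup
  have hHupc : IsClosed Hup := isClosed_le continuous_const Complex.continuous_im
  have habs_closed : ∀ c : ℝ, IsClosed {z : ℂ | c ≤ ‖z‖} :=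
    fun c => isClosed_le continuous_const continuous_norm
  -- the pieces
  set Kin : Set ℂ := Hup ∩ Metric.closedBall 0 (1/4) with hKin
  set Mid : Fin 3 → Set ℂ :=
    fun j => ((Hup ∩ chDom j) ∩ {z | 1/4 ≤ ‖z‖}) ∩ Metric.closedBall 0 (1/2)
    with hMid
  set Out : Fin 3 → Fin m → Set ℂ := fun j i =>
    (((Hup ∩ chDom j) ∩ {z | 1/2 ≤ ‖z‖}) ∩ Metric.closedBall 0 1) ∩
      (fun z => chart j z / Real.pi) ⁻¹' (Set.Icc (t i.castSucc) (t i.succ)) with hOut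
  -- abs facts
  have habs_of_ball : ∀ {z : ℂ} {c : ℝ}, z ∈ Metric.closedBall (0:ℂ) c → ‖z‖ ≤ c := by
    intro z c hz
    rwa [Metric.mem_closedBall, dist_zero_right] at hz
  have hball_of_abs : ∀ {z : ℂ} {c : ℝ}, ‖z‖ ≤ c → z ∈ Metric.closedBall (0:ℂ) c := by
    intro z c hz
    rwa [Metric.mem_closedBall, dist_zero_right]
  -- closedness
  have hKinc : IsClosed Kin := hHupc.inter Metric.isClosed_closedBall
  have hMidc : ∀ j, IsClosed (Mid j) :=
    fun j => (((hHupc.inter (chDom_closed j)).inter (habs_closed _)).inter Metric.isClosed_closedBall)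
  have hOutBasec : ∀ j, IsClosed (((Hup ∩ chDom j) ∩ {z | 1/2 ≤ ‖z‖}) ∩
      Metric.closedBall 0 1) :=
    fun j => ((hHupc.inter (chDom_closed j)).inter (habs_closed _)).inter Metric.isClosed_closedBall
  have hOutc : ∀ j i, IsClosed (Out j i) := by
    intro j i
    apply ContinuousOn.preimage_isClosed_of_isClosed _ (hOutBasec j) isClosed_Icc
    intro z hz
    exact ((chart_contDiffAt hz.1.1.2).continuousAt.continuousWithinAt).div_const _
  -- compactness
  have hKinK : IsCompact Kin :=
    (isCompact_closedBall (0:ℂ) (1/4)).of_isClosed_subset hKinc (fun z hz => hz.2)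
  have hMidK : ∀ j, IsCompact (Mid j) :=
    fun j => (isCompact_closedBall (0:ℂ) (1/2)).of_isClosed_subset (hMidc j)
      (fun z hz => hz.2)
  have hOutK : ∀ j i, IsCompact (Out j i) :=
    fun j i => (isCompact_closedBall (0:ℂ) 1).of_isClosed_subset (hOutc j i)
      (fun z hz => hz.1.2)
  -- smoothness on Kin
  have hKind : ContDiffOn ℝ 1 (fill n γ δ) Kin := by
    apply contDiffOn_const.congr
    intro z hz
    exact fill_eq_inner γ δ (habs_of_ball hz.2)
  -- smoothness on Mid j
  have hMidd : ∀ j, ContDiffOn ℝ 1 (fill n γ δ) (Mid j) := by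
    intro j
    have hinner : ContDiffOn ℝ 1
        (fun z => (4 * ‖z‖ - 1) * (chart j z / Real.pi)) (Mid j) := by
      intro z hz
      have hne : z ≠ 0 := by
        intro h
        have := hz.1.2
        rw [h] at this
        simp at this
        linarith [this]
      exact (((contDiffAt_const.mul (contDiffAt_cabs hne)).sub contDiffAt_const).mul
        ((chart_contDiffAt hz.1.1.2).div_const _)).contDiffWithinAt
    have hmaps : Set.MapsTo (fun z => (4 * ‖z‖ - 1) * (chart j z / Real.pi))
        (Mid j) (Set.Icc (0:ℝ) 1) := by
      intro z hz
      have hargeq : chart j z / Real.pi = fillA z := by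
        rw [chart_eq_arg hz.1.1.2 hz.1.1.1, fillA]
      have hA := fillA_mem hz.1.1.1
      have h1 : (1:ℝ)/4 ≤ ‖z‖ := hz.1.2
      have h2 : ‖z‖ ≤ 1/2 := habs_of_ball hz.2
      show (4 * ‖z‖ - 1) * (chart j z / Real.pi) ∈ Set.Icc (0:ℝ) 1
      rw [hargeq]
      constructor
      · exact mul_nonneg (by linarith) hA.1
      · exact mul_le_one₀ (by linarith) hA.1 hA.2
    have hcomp := hδ.comp hinner hmaps
    apply hcomp.congr
    intro z hz
    rw [fill_eq_mid γ δ hz.1.2 (habs_of_ball hz.2)]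
    show δ _ = (δ ∘ _) z
    simp only [Function.comp]
    congr 1
    rw [chart_eq_arg hz.1.1.2 hz.1.1.1, fillA]
  -- smoothness on Out j i
  have hOutd : ∀ j i, ContDiffOn ℝ 1 (fill n γ δ) (Out j i) := by
    intro j i
    have hIccsub : Set.Icc (t i.castSucc) (t i.succ) ⊆ Set.Icc (0:ℝ) 1 := by
      apply Set.Icc_subset_Icc
      · rw [← ht0]; exact ht (Fin.zero_le _)
      · rw [← ht1]; exact ht (Fin.le_last _)
    have hF : ContDiffOn ℝ 1 (fun z =>
        (2 * ‖z‖ - 1) • γ (chart j z / Real.pi)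
          + (2 - 2 * ‖z‖) • δ (chart j z / Real.pi)) (Out j i) := by
      intro z hz
      have hne : z ≠ 0 := by
        intro h
        have := hz.1.1.2
        rw [h] at this
        simp at this
        linarith [this]
      have habsw : ContDiffWithinAt ℝ 1 (fun w => ‖w‖) (Out j i) z :=
        (contDiffAt_cabs hne).contDiffWithinAt
      have hchw : ContDiffWithinAt ℝ 1 (fun w => chart j w / Real.pi) (Out j i) z :=
        ((chart_contDiffAt hz.1.1.1.2).div_const _).contDiffWithinAt
      have hγw : ContDiffWithinAt ℝ 1 (fun w => γ (chart j w / Real.pi)) (Out j i) z := by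
        have hmem : (fun w => chart j w / Real.pi) z ∈ Set.Icc (t i.castSucc) (t i.succ) := hz.2
        have := ContDiffWithinAt.comp z (hγ i _ hmem) hchw (fun w hw => hw.2)
        exact this
      have hδw : ContDiffWithinAt ℝ 1 (fun w => δ (chart j w / Real.pi)) (Out j i) z := by
        have hmem : (fun w => chart j w / Real.pi) z ∈ Set.Icc (0:ℝ) 1 := hIccsub hz.2
        have := ContDiffWithinAt.comp z (hδ _ hmem) hchw (fun w hw => hIccsub hw.2)
        exact this
      exact (((contDiffAt_const.mul (contDiffAt_cabs hne)).contDiffWithinAt.sub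
        contDiffWithinAt_const).smul hγw).add
        ((contDiffWithinAt_const.sub
          (contDiffAt_const.mul (contDiffAt_cabs hne)).contDiffWithinAt).smul hδw)
    apply hF.congr
    intro z hz
    rw [fill_eq_outer γ δ hz.1.1.2]
    have : chart j z / Real.pi = fillA z := by
      rw [chart_eq_arg hz.1.1.1.2 hz.1.1.1.1, fillA]
    rw [this]
  -- assemble
  have hcover : HDisk ⊆ (⋃ x : Unit ⊕ (Fin 3 ⊕ (Fin 3 × Fin m)),
      (Sum.elim (fun _ => Kin) (Sum.elim Mid (fun p => Out p.1 p.2))) x) := by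
    intro z hz
    obtain ⟨him, habs1⟩ := hz
    rw [Set.mem_iUnion]
    by_cases h4 : ‖z‖ ≤ 1/4
    · exact ⟨Sum.inl (), him, hball_of_abs h4⟩
    push_neg at h4
    obtain ⟨j, hj⟩ := chDom_cover (le_of_lt h4) him
    by_cases h2 : ‖z‖ ≤ 1/2
    · exact ⟨Sum.inr (Sum.inl j), ⟨⟨him, hj⟩, le_of_lt h4⟩, hball_of_abs h2⟩
    push_neg at h2
    have hA := fillA_mem him
    obtain ⟨i, hi⟩ := exists_partition_mem ht ht0 ht1 hA
    refine ⟨Sum.inr (Sum.inr (j, i)), ⟨⟨⟨him, hj⟩, le_of_lt h2⟩, hball_of_abs habs1⟩, ?_⟩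
    show chart j z / Real.pi ∈ Set.Icc (t i.castSucc) (t i.succ)
    rw [chart_eq_arg hj him]
    exact hi
  refine piecewise_of_cover (ι := Unit ⊕ (Fin 3 ⊕ (Fin 3 × Fin m)))
    (Sum.elim (fun _ => Kin) (Sum.elim Mid (fun p => Out p.1 p.2))) ?_ ?_ hcover ?_
  · rintro (⟨⟩ | j | ⟨j, i⟩)
    · exact hKinK
    · exact hMidK j
    · exact hOutK j i
  · rintro (⟨⟩ | j | ⟨j, i⟩)
    · exact hKinc
    · exact hMidc j
    · exact hOutc j i
  · rintro (⟨⟩ | j | ⟨j, i⟩)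
    · exact hKind
    · exact hMidd j
    · exact hOutd j i

def deltaPath (n : ℕ) (f : EuclideanSpace ℝ (Fin n) → ℝ)
    (a : EuclideanSpace ℝ (Fin n)) : ℝ → EuclideanSpace ℂ (Fin n) :=
  fun s => mk2 n (s • a) (gradient f (s • a))

lemma smul_mapsTo {a : EuclideanSpace ℝ (Fin n)} {r : ℝ} (ha : ‖a‖ < r) :
    Set.MapsTo (fun s : ℝ => s • a) (Set.Icc (0:ℝ) 1) (Metric.ball 0 r) := by
  intro s hs
  rw [Metric.mem_ball, dist_zero_right, norm_smul, Real.norm_eq_abs,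
    _root_.abs_of_nonneg hs.1]
  nlinarith [norm_nonneg a, hs.2, hs.1]

lemma deltaPath_contDiffOn {f : EuclideanSpace ℝ (Fin n) → ℝ}
    {a : EuclideanSpace ℝ (Fin n)} {r : ℝ}
    (hg : ContDiffOn ℝ 1 (gradient f) (Metric.ball 0 r)) (ha : ‖a‖ < r) :
    ContDiffOn ℝ 1 (deltaPath n f a) (Set.Icc (0:ℝ) 1) := by
  rw [contDiffOn_piLp 2]
  intro k
  have hsa : ContDiff ℝ 1 (fun s : ℝ => s • a) := contDiff_id.smul contDiff_const
  have hgk : ContDiffOn ℝ 1 (fun x => gradient f x k) (Metric.ball 0 r) :=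
    (contDiffOn_piLp 2).1 hg k
  have h1 : ContDiffOn ℝ 1 (fun s : ℝ => gradient f (s • a) k) (Set.Icc (0:ℝ) 1) := by
    have := hgk.comp hsa.contDiffOn (smul_mapsTo ha)
    exact this
  have h2 : ContDiff ℝ 1 (fun s : ℝ => ((s • a : EuclideanSpace ℝ (Fin n)) k : ℂ)) := by
    have heq : (fun s : ℝ => ((s • a : EuclideanSpace ℝ (Fin n)) k : ℂ))
        = fun s : ℝ => ((s * a k : ℝ) : ℂ) := by
      funext s
      rw [PiLp.smul_apply, smul_eq_mul]
    rw [heq]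
    exact Complex.ofRealCLM.contDiff.comp (contDiff_id.mul contDiff_const)
  have h3 : ContDiffOn ℝ 1
      (fun s : ℝ => ((gradient f (s • a) k : ℝ) : ℂ) * Complex.I) (Set.Icc (0:ℝ) 1) :=
    (Complex.ofRealCLM.contDiff.comp_contDiffOn h1).mul contDiffOn_const
  have := h2.contDiffOn.add h3
  exact this.congr (fun s _ => rfl)

end FillingAux

/-- **Existence of fillings defining the local symplectic action, flat model**
(Theorem 4.1(1) / Corollary 4.6 of Solomon–Verbitsky). For `Q₀ = ℝⁿ × {0}` and
`Q₁ = graph(∇f)` with `f` real analytic on the open set `U ∋ 0` and `∇f(0) = 0`,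
there is `ε₀ > 0` such that for each `ε ∈ (0, ε₀]`, every piecewise-`C¹` path
`γ : [0,1] → B_{ε/9}(0)` with `γ(0) ∈ Q₀`, `γ(1) ∈ Q₁` admits a continuous,
piecewise-`C¹` filling `v : H → B_ε(γ(0))` with `v([0,1]) ⊆ Q₀`, `v([−1,0]) ⊆ Q₁`,
`v(0) = 0` and `v(e^{iπt}) = γ(t)`. -/
theorem exists_filling
    (n : ℕ)
    (U : Set (EuclideanSpace ℝ (Fin n))) (hUopen : IsOpen U)
    (hU0 : (0 : EuclideanSpace ℝ (Fin n)) ∈ U)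
    (f : EuclideanSpace ℝ (Fin n) → ℝ) (hf : AnalyticOn ℝ f U)
    (hgrad : gradient f 0 = 0) :
    ∃ ε₀ : ℝ, 0 < ε₀ ∧
      ∀ ε : ℝ, 0 < ε → ε ≤ ε₀ →
        ∀ γ : ℝ → EuclideanSpace ℂ (Fin n),
          PiecewiseC1Path n γ →
          (∀ t ∈ Set.Icc (0:ℝ) 1,
            γ t ∈ Metric.ball (0 : EuclideanSpace ℂ (Fin n)) (ε / 9)) →
          γ 0 ∈ Q0 n →
          γ 1 ∈ Q1 n U f →
          ∃ v : ℂ → EuclideanSpace ℂ (Fin n),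
            PiecewiseC1On n v HDisk ∧
            (∀ z ∈ HDisk, v z ∈ Metric.ball (γ 0) ε) ∧
            (∀ t ∈ Set.Icc (0:ℝ) 1, v (t : ℂ) ∈ Q0 n) ∧
            (∀ t ∈ Set.Icc (-1:ℝ) 0, v (t : ℂ) ∈ Q1 n U f) ∧
            v 0 = 0 ∧
            (∀ t ∈ Set.Icc (0:ℝ) 1,
              v (Complex.exp (↑(Real.pi * t) * Complex.I)) = γ t)     := by
  classical
  obtain ⟨r, hrpos, hrU, hgsm, hgbd⟩ := grad_package hUopen hU0 hf hgrad
  refine ⟨r, hrpos, ?_⟩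
  intro ε hε hεr γ hpw hb h0 h1
  set a := reP n (γ 1) with ha
  set δ := deltaPath n f a with hδdef
  have hγ1mem : ‖γ 1‖ < ε/9 := by
    have := hb 1 (by norm_num)
    rwa [Metric.mem_ball, dist_zero_right] at this
  have hγ0n : ‖γ 0‖ < ε/9 := by
    have := hb 0 (by norm_num)
    rwa [Metric.mem_ball, dist_zero_right] at this
  have hεr9 : ε/9 < r := by linarith
  have han : ‖a‖ < ε/9 := lt_of_le_of_lt (norm_reP_le _) hγ1mem
  have hanr : ‖a‖ < r := lt_trans han hεr9
  have haU := smul_mapsTo hanr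
  have hgan : ‖gradient f a‖ < ε/9 := by
    rw [← h1.2]
    exact lt_of_le_of_lt (norm_imP_le _) hγ1mem
  have hγ1eq : γ 1 = mk2 n a (gradient f a) := by
    conv_lhs => rw [eq_mk2_of_parts (γ 1)]
    rw [h1.2]
  have hδQ1 : ∀ s ∈ Set.Icc (0:ℝ) 1, δ s ∈ Q1 n U f := by
    intro s hs
    refine ⟨?_, ?_⟩
    · rw [hδdef]
      show reP n (mk2 n (s • a) (gradient f (s • a))) ∈ U
      rw [reP_mk2]
      exact hrU (haU hs)
    · rw [hδdef]
      show imP n (mk2 n (s • a) (gradient f (s • a)))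
        = gradient f (reP n (mk2 n (s • a) (gradient f (s • a))))
      rw [reP_mk2, imP_mk2]
  have hδnorm : ∀ s ∈ Set.Icc (0:ℝ) 1, ‖δ s‖ ≤ ‖a‖ + (‖gradient f a‖ + ‖a‖) := by
    intro s hs
    have h1' := hgbd a (by rwa [Metric.mem_ball, dist_zero_right]) s hs
    have h2' : ‖s • a‖ ≤ ‖a‖ := by
      rw [norm_smul, Real.norm_eq_abs, _root_.abs_of_nonneg hs.1]
      nlinarith [norm_nonneg a, hs.1, hs.2]
    calc ‖δ s‖ ≤ ‖s • a‖ + ‖gradient f (s • a)‖ := norm_mk2_le _ _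
      _ ≤ ‖a‖ + (‖gradient f a‖ + ‖a‖) := by linarith
  have hδ0 : δ 0 = 0 := by
    rw [hδdef]
    show mk2 n ((0:ℝ) • a) (gradient f ((0:ℝ) • a)) = 0
    rw [zero_smul, hgrad]
    refine PiLp.ext fun k => ?_
    simp [mk2]
  have hδ1 : δ 1 = γ 1 := by
    rw [hδdef]
    show mk2 n ((1:ℝ) • a) (gradient f ((1:ℝ) • a)) = γ 1
    rw [one_smul, hγ1eq]
  have hreP0 : reP n 0 = 0 := by refine PiLp.ext fun k => ?_; simp [reP]
  have himP0 : imP n 0 = 0 := by refine PiLp.ext fun k => ?_; simp [imP]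
  obtain ⟨hγc, m, tt, htmono, ht0, ht1, hγi⟩ := hpw
  refine ⟨fill n γ δ, ?_, ?_, ?_, ?_, ?_, ?_⟩
  · exact fill_piecewiseC1 γ δ m tt htmono ht0 ht1 hγi (deltaPath_contDiffOn hgsm hanr)
  · intro z hz
    rw [Metric.mem_ball, dist_eq_norm]
    have hB : ‖fill n γ δ z - γ 0‖ ≤ 4*ε/9 := by
      apply fill_norm_le γ δ (γ 0) (4*ε/9) _ _ hz
      · intro s hs
        have := hb s hs
        rw [Metric.mem_ball, dist_zero_right] at this
        calc ‖γ s - γ 0‖ ≤ ‖γ s‖ + ‖γ 0‖ := norm_sub_le _ _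
          _ ≤ 4*ε/9 := by linarith
      · intro s hs
        calc ‖δ s - γ 0‖ ≤ ‖δ s‖ + ‖γ 0‖ := norm_sub_le _ _
          _ ≤ 4*ε/9 := by linarith [hδnorm s hs]
    linarith
  · intro s hs
    rw [fill_ofReal_nonneg γ δ hs.1]
    split_ifs with h
    · rw [hδ0, smul_zero, add_zero]
      intro k
      rw [PiLp.smul_apply, Complex.smul_im, h0 k, smul_eq_mul, mul_zero]
    · rw [hδ0]
      intro k
      simp
  · intro s hs
    rcases eq_or_lt_of_le hs.2 with heq | hlt
    · rw [heq]
      show fill n γ δ ((0:ℝ):ℂ) ∈ Q1 n U f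
      rw [Complex.ofReal_zero, fill_zero, hδ0]
      refine ⟨?_, ?_⟩
      · rw [hreP0]; exact hU0
      · rw [hreP0, himP0, hgrad]
    · rw [fill_ofReal_neg γ δ hδ1 hlt]
      split_ifs with h
      · exact h1
      · push_neg at h
        apply hδQ1
        exact ⟨le_max_left _ _, max_le (by norm_num) (by linarith)⟩
  · rw [fill_zero γ δ, hδ0]
  · intro s hs
    exact fill_arc γ δ hs.1 hs.2


end
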